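/- Every strongly null subset of 2^ω is perfectly null in the transitive sense: if X ⊆ 2^ω is strongly null, then for every perfect set P ⊆ 2^ω there exists a G_δ set G ⊇ X such that for every t ∈ 2^ω the set (G + t) ∩ P is P-null. -/

import Mathlib

open MeasureTheory Set Pointwise

/-- The Cantor space `2^ω`, a compact topological group under coordinatewise
addition mod 2. -/
abbrev CS := ℕ → ZMod 2

/-- The basic clopen set `[w]` determined by a finite binary sequence `w`:
all `x ∈ 2^ω` extending `w`. -/
def cyl (w : List (ZMod 2)) : Set CS := {x | ∀ i, i < w.length → x i = w.getD i 0}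

/-- `w` is a branching node of `P`: both `[w⌢0] ∩ P` and `[w⌢1] ∩ P` are nonempty. -/
def Branch (P : Set CS) (w : List (ZMod 2)) : Prop :=
  (cyl (w ++ [0]) ∩ P).Nonempty ∧ (cyl (w ++ [1]) ∩ P).Nonempty

/-- A perfect subset of Cantor space: nonempty, closed, with no isolated points. -/
def PerfSet (P : Set CS) : Prop := Perfect P ∧ P.Nonempty

/-- `ν` is a canonical measure of the perfect set `P`: a Borel probability measure with
`ν P = 1` and `ν [w⌢0] = ν [w⌢1]` for every branching node `w` of `P`. -/
def IsCanonical (P : Set CS) (ν : Measure CS) : Prop :=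
  IsProbabilityMeasure ν ∧ ν P = 1 ∧
    ∀ w : List (ZMod 2), Branch P w → ν (cyl (w ++ [0])) = ν (cyl (w ++ [1]))

/-- `A` is `P`-null: the `μ_P`-outer measure of `A ∩ P` is `0`
(quantified over all canonical measures of `P`). -/
def PNull (P A : Set CS) : Prop := ∀ ν : Measure CS, IsCanonical P ν → ν (A ∩ P) = 0

/-- `A` is `P`-measurable: `A ∩ P` differs from a Borel set by a `P`-null set,
i.e. it is null-measurable with respect to the canonical measure of `P`. -/
def PMeasurable (P A : Set CS) : Prop :=
  ∀ ν : Measure CS, IsCanonical P ν → NullMeasurableSet (A ∩ P) ν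

/-- `X` is perfectly null: `P`-null for every perfect set `P`. -/
def PerfectlyNull (X : Set CS) : Prop := ∀ P, PerfSet P → PNull P X

/-- `μ` is the fair-coin (Lebesgue product) measure on `2^ω`:
a Borel probability measure with `μ [w] = 2^{-|w|}` for every finite binary sequence. -/
def IsFairCoin (μ : Measure CS) : Prop :=
  IsProbabilityMeasure μ ∧ ∀ w : List (ZMod 2), μ (cyl w) = (2 : ENNReal)⁻¹ ^ w.length

/-- The number of branching nodes of `P` that are proper initial segments of `v`. -/
noncomputable def brCount (P : Set CS) (v : List (ZMod 2)) : ℕ :=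
  Set.ncard {u : List (ZMod 2) | u <+: v ∧ u ≠ v ∧ Branch P u}

/-- A balanced perfect set: branching nodes of strictly smaller level
are strictly shorter. -/
def BalancedPerf (P : Set CS) : Prop :=
  PerfSet P ∧ ∀ v w : List (ZMod 2), Branch P v → Branch P w →
    brCount P v < brCount P w → v.length < w.length

/-- A uniformly perfect set: on each length, either all nodes meeting `P` branch,
or none does. -/
def UniformlyPerf (P : Set CS) : Prop :=
  PerfSet P ∧ ∀ n : ℕ,
    (∀ w : List (ZMod 2), w.length = n → (cyl w ∩ P).Nonempty → Branch P w) ∨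
    (∀ w : List (ZMod 2), w.length = n → ¬ Branch P w)

/-- A Silver perfect set: determined by a partial function `ℕ ⇀ 2`
whose domain has infinite complement. -/
def SilverPerf (P : Set CS) : Prop :=
  ∃ f : ℕ → Option (ZMod 2), {n | f n = none}.Infinite ∧
    P = {x | ∀ n b, f n = some b → x n = b}

/-- A Marczewski null (`s₀`) set. -/
def S0Set (X : Set CS) : Prop :=
  ∀ P, PerfSet P → ∃ Q, PerfSet Q ∧ Q ⊆ P ∧ Q ∩ X = ∅

/-- `S` is a Sierpiński set with respect to the measure `μ`: uncountable, with
countable intersection with every `μ`-null set. -/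
def Sierpinski (μ : Measure CS) (S : Set CS) : Prop :=
  ¬ S.Countable ∧ ∀ N : Set CS, μ N = 0 → (S ∩ N).Countable

/-- The interleaving homeomorphism `h : 2^ω × 2^ω → 2^ω`,
`h(x,y) = ⟨x 0, y 0, x 1, y 1, …⟩`. -/
def interleave (p : CS × CS) : CS := fun n => if n % 2 = 0 then p.1 (n / 2) else p.2 (n / 2)

/-- `X` is universally null: outer measure zero with respect to every finite diffused
Borel measure on `2^ω`. -/
def UniversallyNull (X : Set CS) : Prop :=
  ∀ μ : Measure CS, IsFiniteMeasure μ → (∀ x : CS, μ {x} = 0) → μ X = 0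

/-- `X` is strongly null: for every sequence of positive `ε n` there are sets `A n` of
diameter `< ε n` (with respect to the standard metric `d(x,y) = 2^{-min{n : x n ≠ y n}}`,
expressed combinatorially) covering `X`. -/
def StronglyNull (X : Set CS) : Prop :=
  ∀ ε : ℕ → ℝ, (∀ n, 0 < ε n) → ∃ A : ℕ → Set CS,
    (∀ n, ∃ N : ℕ, (2 : ℝ)⁻¹ ^ N < ε n ∧ ∀ x ∈ A n, ∀ y ∈ A n, ∀ i < N, x i = y i) ∧
    X ⊆ ⋃ n, A n

/-- `X` is perfectly null in the transitive sense: for every perfect `P` there is a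
`G_δ` set `G ⊇ X` with `(G + t) ∩ P` being `P`-null for every `t`. -/
def PNPrime (X : Set CS) : Prop :=
  ∀ P, PerfSet P → ∃ G : Set CS, IsGδ G ∧ X ⊆ G ∧
    ∀ t : CS, PNull P ((fun g => g + t) '' G)


section Stmt15Aux

open Filter Topology

/-- The list of the first `n` values of `x`. -/
private def tk (x : CS) (n : ℕ) : List (ZMod 2) := List.ofFn (fun i : Fin n => x i)

private lemma tk_length (x : CS) (n : ℕ) : (tk x n).length = n := List.length_ofFn

private lemma tk_getD (x : CS) {n i : ℕ} (h : i < n) : (tk x n).getD i 0 = x i := by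
  rw [List.getD_eq_getElem _ _ (by simpa [tk] using h)]
  simp [tk]

private lemma mem_cyl_tk (x : CS) (n : ℕ) : x ∈ cyl (tk x n) := by
  intro i hi
  rw [tk_length] at hi
  rw [tk_getD _ hi]

private lemma tk_eq_of_mem_cyl {x : CS} {w : List (ZMod 2)} (h : x ∈ cyl w) :
    tk x w.length = w := by
  apply List.ext_getElem (by simp [tk])
  intro i h1 h2
  have h3 := h i (by simpa [tk] using h1)
  rw [List.getD_eq_getElem _ _ h2] at h3
  simpa [tk] using h3

private lemma getD_append_lt (w w' : List (ZMod 2)) {i : ℕ} (h : i < w.length) :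
    (w ++ w').getD i 0 = w.getD i 0 := by
  rw [List.getD_eq_getElem _ _ (by simp; omega), List.getD_eq_getElem _ _ h,
    List.getElem_append_left]

private lemma getD_concat_self {w : List (ZMod 2)} {b : ZMod 2} :
    (w ++ [b]).getD w.length 0 = b := by
  rw [List.getD_eq_getElem _ _ (by simp)]
  exact List.getElem_concat_length rfl (by simp)

private lemma mem_cyl_append {x : CS} {w : List (ZMod 2)} {b : ZMod 2} :
    x ∈ cyl (w ++ [b]) ↔ x ∈ cyl w ∧ x w.length = b := by
  constructor
  · intro h
    refine ⟨fun i hi => ?_, ?_⟩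
    · have h1 := h i (by simp; omega)
      rwa [getD_append_lt _ _ hi] at h1
    · have h1 := h w.length (by simp)
      rwa [getD_concat_self] at h1
  · rintro ⟨h1, h2⟩ i hi
    simp only [List.length_append, List.length_singleton] at hi
    rcases Nat.lt_or_ge i w.length with hlt | hge
    · rw [getD_append_lt _ _ hlt]; exact h1 i hlt
    · have hieq : i = w.length := by omega
      subst hieq
      rwa [getD_concat_self]

private lemma cyl_subset_of_prefix {v w : List (ZMod 2)} (h : v <+: w) : cyl w ⊆ cyl v := by
  intro x hx i hi
  obtain ⟨u, rfl⟩ := h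
  rw [← getD_append_lt v u hi]
  exact hx i (by simp; omega)

private lemma isOpen_cyl (w : List (ZMod 2)) : IsOpen (cyl w) := by
  have h : cyl w = ⋂ i ∈ Finset.range w.length, (fun x : CS => x i) ⁻¹' {w.getD i 0} := by
    ext x
    simp only [Set.mem_iInter, Finset.mem_range, Set.mem_preimage, Set.mem_singleton_iff]
    rfl
  rw [h]
  exact isOpen_biInter_finset fun i _ =>
    (continuous_apply i).isOpen_preimage _ (isOpen_discrete _)

private lemma measurableSet_cyl (w : List (ZMod 2)) : MeasurableSet (cyl w) :=
  (isOpen_cyl w).measurableSet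

private lemma cyl_nil : cyl ([] : List (ZMod 2)) = Set.univ := by
  ext x; simp [cyl]

private lemma cyl_eq_union (w : List (ZMod 2)) :
    cyl w = cyl (w ++ [0]) ∪ cyl (w ++ [1]) := by
  ext x
  simp only [Set.mem_union, mem_cyl_append]
  constructor
  · intro h
    rcases (by decide : ∀ a : ZMod 2, a = 0 ∨ a = 1) (x w.length) with h0 | h1
    · exact Or.inl ⟨h, h0⟩
    · exact Or.inr ⟨h, h1⟩
  · rintro (⟨h, -⟩ | ⟨h, -⟩) <;> exact h

private lemma cyl_disjoint (w : List (ZMod 2)) :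
    Disjoint (cyl (w ++ [0])) (cyl (w ++ [1])) := by
  rw [Set.disjoint_iff_inter_eq_empty]
  ext x
  simp only [Set.mem_inter_iff, mem_cyl_append, Set.mem_empty_iff_false, iff_false]
  rintro ⟨⟨-, h0⟩, ⟨-, h1⟩⟩
  rw [h0] at h1
  exact (by decide : (0 : ZMod 2) ≠ 1) h1

private lemma measure_cyl_split (ν : Measure CS) (w : List (ZMod 2)) :
    ν (cyl w) = ν (cyl (w ++ [0])) + ν (cyl (w ++ [1])) := by
  rw [cyl_eq_union w, measure_union (cyl_disjoint w) (measurableSet_cyl _)]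

private lemma finite_prefixes (v : List (ZMod 2)) : {u : List (ZMod 2) | u <+: v}.Finite := by
  apply Set.Finite.subset ((Set.finite_Iic v.length).image (fun n => v.take n))
  intro u hu
  exact ⟨u.length, hu.length_le, (List.prefix_iff_eq_take.mp hu).symm⟩

private lemma brCount_nil (P : Set CS) : brCount P [] = 0 := by
  unfold brCount
  convert Set.ncard_empty (List (ZMod 2))
  ext u
  simp only [Set.mem_setOf_eq, Set.mem_empty_iff_false, iff_false, not_and]
  intro h1 h2
  exact absurd (List.prefix_nil.mp h1) h2

private lemma prefix_concat_iff' {u w : List (ZMod 2)} {b : ZMod 2} :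
    (u <+: w ++ [b] ∧ u ≠ w ++ [b]) ↔ u <+: w := by
  constructor
  · rintro ⟨h1, h2⟩
    have hl : u.length ≤ w.length + 1 := by simpa using h1.length_le
    rcases Nat.lt_or_ge u.length (w.length + 1) with hl' | hl'
    · have he : u = (w ++ [b]).take u.length := List.prefix_iff_eq_take.mp h1
      rw [List.take_append_of_le_length (by omega)] at he
      exact he ▸ List.take_prefix _ _
    · exact absurd (h1.eq_of_length (by simp; omega)) h2
  · intro h
    refine ⟨h.trans (List.prefix_append w [b]), fun he => ?_⟩
    have := h.length_le
    rw [he] at this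
    simp at this

private lemma brCount_set_concat (P : Set CS) (w : List (ZMod 2)) (b : ZMod 2) :
    brCount P (w ++ [b]) = {u : List (ZMod 2) | u <+: w ∧ Branch P u}.ncard := by
  have hset : {u : List (ZMod 2) | u <+: w ++ [b] ∧ u ≠ w ++ [b] ∧ Branch P u} =
      {u : List (ZMod 2) | u <+: w ∧ Branch P u} := by
    ext u
    simp only [Set.mem_setOf_eq]
    constructor
    · rintro ⟨h1, h2, h3⟩
      exact ⟨prefix_concat_iff'.mp ⟨h1, h2⟩, h3⟩
    · rintro ⟨h1, h3⟩
      obtain ⟨g1, g2⟩ := prefix_concat_iff'.mpr h1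
      exact ⟨g1, g2, h3⟩
  unfold brCount
  rw [hset]

private lemma brCount_concat_branch (P : Set CS) (w : List (ZMod 2)) (b : ZMod 2)
    (hb : Branch P w) : brCount P (w ++ [b]) = brCount P w + 1 := by
  rw [brCount_set_concat]
  · have hins : {u : List (ZMod 2) | u <+: w ∧ Branch P u} =
        insert w {u : List (ZMod 2) | u <+: w ∧ u ≠ w ∧ Branch P u} := by
      ext u
      simp only [Set.mem_insert_iff, Set.mem_setOf_eq]
      constructor
      · rintro ⟨h1, h3⟩
        by_cases h : u = w
        · exact Or.inl h
        · exact Or.inr ⟨h1, h, h3⟩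
      · rintro (rfl | ⟨h1, h2, h3⟩)
        · exact ⟨List.prefix_refl _, hb⟩
        · exact ⟨h1, h3⟩
    rw [hins, Set.ncard_insert_of_notMem (fun h => h.2.1 rfl)
      ((finite_prefixes w).subset (fun u hu => hu.1))]
    rfl

private lemma brCount_concat_not (P : Set CS) (w : List (ZMod 2)) (b : ZMod 2)
    (hb : ¬ Branch P w) : brCount P (w ++ [b]) = brCount P w := by
  rw [brCount_set_concat]
  · unfold brCount
    congr 1
    ext u
    simp only [Set.mem_setOf_eq]
    constructor
    · rintro ⟨h1, h3⟩
      refine ⟨h1, fun he => ?_, h3⟩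
      subst he
      exact hb h3
    · rintro ⟨h1, h2, h3⟩
      exact ⟨h1, h3⟩

private lemma tk_take (x : CS) {a b : ℕ} (h : a ≤ b) : (tk x b).take a = tk x a := by
  apply List.ext_getElem (by simp [tk]; omega)
  intro i h1 h2
  simp [tk, List.getElem_take]

private lemma tk_prefix (x : CS) {a b : ℕ} (h : a ≤ b) : tk x a <+: tk x b := by
  rw [← tk_take x h]
  exact List.take_prefix _ _

private lemma brCount_mono (P : Set CS) (x : CS) {a b : ℕ} (h : a ≤ b) :
    brCount P (tk x a) ≤ brCount P (tk x b) := by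
  apply Set.ncard_le_ncard _ ((finite_prefixes _).subset fun u hu => hu.1)
  rintro u ⟨h1, h2, h3⟩
  have hle : u.length ≤ a := by simpa [tk_length] using h1.length_le
  have hlt : u.length < a := by
    rcases Nat.lt_or_ge u.length a with h' | h'
    · exact h'
    · exact absurd (h1.eq_of_length (by rw [tk_length]; omega)) h2
  refine ⟨h1.trans (tk_prefix x h), fun he => ?_, h3⟩
  rw [he, tk_length] at hlt
  omega

private lemma measure_compl_P {P : Set CS} {ν : Measure CS} (hP : PerfSet P)
    (hν : IsCanonical P ν) : ν Pᶜ = 0 := by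
  haveI := hν.1
  rw [measure_compl hP.1.closed.measurableSet (measure_ne_top ν P), hν.2.1, measure_univ]
  simp

private lemma measure_cyl_le_brCount {P : Set CS} {ν : Measure CS}
    (hν : IsCanonical P ν) (w : List (ZMod 2)) :
    ν (cyl w) ≤ 2⁻¹ ^ brCount P w := by
  haveI := hν.1
  induction w using List.reverseRecOn with
  | nil => rw [brCount_nil, cyl_nil, pow_zero, measure_univ]
  | append_singleton w b ih =>
    by_cases hb : Branch P w
    · rw [brCount_concat_branch P w b hb]
      have hsum := measure_cyl_split ν w
      have heq := hν.2.2 w hb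
      have key : ν (cyl (w ++ [b])) + ν (cyl (w ++ [b])) = ν (cyl w) := by
        rcases (by decide : ∀ b : ZMod 2, b = 0 ∨ b = 1) b with rfl | rfl
        · nth_rewrite 2 [heq]
          exact hsum.symm
        · nth_rewrite 1 [← heq]
          exact hsum.symm
      have hhalf : ν (cyl (w ++ [b])) = 2⁻¹ * ν (cyl w) := by
        calc ν (cyl (w ++ [b])) = 2⁻¹ * (ν (cyl (w ++ [b])) + ν (cyl (w ++ [b]))) := by
              rw [← two_mul, ← mul_assoc, ENNReal.inv_mul_cancel (by norm_num) (by norm_num),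
                one_mul]
          _ = 2⁻¹ * ν (cyl w) := by rw [key]
      rw [hhalf, pow_succ, mul_comm ((2 : ENNReal)⁻¹ ^ brCount P w) 2⁻¹]
      exact mul_le_mul_right ih _
    · rw [brCount_concat_not P w b hb]
      exact le_trans (measure_mono (cyl_subset_of_prefix (List.prefix_append w [b]))) ih

private lemma exists_branch_ge {P : Set CS} (hP : Perfect P) {x : CS} (hx : x ∈ P) (m : ℕ) :
    ∃ d, m ≤ d ∧ Branch P (tk x d) := by
  have hacc := (accPt_iff_nhds (x := x) (C := P)).mp (hP.acc x hx)
  obtain ⟨y, ⟨hy1, hy2⟩, hyx⟩ :=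
    hacc (cyl (tk x m)) ((isOpen_cyl _).mem_nhds (mem_cyl_tk x m))
  have hne : ∃ i, x i ≠ y i := by
    by_contra h
    push_neg at h
    exact hyx (funext fun i => (h i).symm)
  set d := Nat.find hne with hdd
  have hd : x d ≠ y d := Nat.find_spec hne
  have hmin : ∀ i < d, x i = y i := fun i hi => not_not.mp (Nat.find_min hne hi)
  have hdm : m ≤ d := by
    by_contra h
    push_neg at h
    exact hd (((hy1 d (by rw [tk_length]; exact h)).trans (tk_getD x h)).symm)
  refine ⟨d, hdm, ?_⟩
  have hxc : x ∈ cyl (tk x d ++ [x d]) := by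
    rw [mem_cyl_append]
    exact ⟨mem_cyl_tk x d, by rw [tk_length]⟩
  have hyc : y ∈ cyl (tk x d ++ [y d]) := by
    rw [mem_cyl_append]
    refine ⟨fun i hi => ?_, by rw [tk_length]⟩
    rw [tk_length] at hi
    rw [tk_getD x hi]
    exact (hmin i hi).symm
  rcases (by decide : ∀ a b : ZMod 2, a ≠ b → (a = 0 ∧ b = 1) ∨ (a = 1 ∧ b = 0))
      (x d) (y d) hd with ⟨h1, h2⟩ | ⟨h1, h2⟩
  · rw [h1] at hxc
    rw [h2] at hyc
    exact ⟨⟨x, hxc, hx⟩, ⟨y, hyc, hy2⟩⟩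
  · rw [h1] at hxc
    rw [h2] at hyc
    exact ⟨⟨y, hyc, hy2⟩, ⟨x, hxc, hx⟩⟩

private lemma exists_brCount_ge {P : Set CS} (hP : Perfect P) {x : CS} (hx : x ∈ P) (k : ℕ) :
    ∃ d, k ≤ brCount P (tk x d) := by
  induction k with
  | zero => exact ⟨0, Nat.zero_le _⟩
  | succ k ih =>
    obtain ⟨d, hd⟩ := ih
    obtain ⟨d', hdd', hbr⟩ := exists_branch_ge hP hx d
    refine ⟨d' + 1, ?_⟩
    have hfin0 : {u : List (ZMod 2) | u <+: tk x d ∧ u ≠ tk x d ∧ Branch P u}.Finite :=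
      (finite_prefixes _).subset fun u hu => hu.1
    have hfin1 : {u : List (ZMod 2) | u <+: tk x (d' + 1) ∧ u ≠ tk x (d' + 1) ∧
        Branch P u}.Finite := (finite_prefixes _).subset fun u hu => hu.1
    have hsub : insert (tk x d') {u : List (ZMod 2) | u <+: tk x d ∧ u ≠ tk x d ∧ Branch P u}
        ⊆ {u : List (ZMod 2) | u <+: tk x (d' + 1) ∧ u ≠ tk x (d' + 1) ∧ Branch P u} := by
      rintro u (rfl | ⟨h1, h2, h3⟩)
      · refine ⟨tk_prefix x (by omega), fun he => ?_, hbr⟩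
        have := congrArg List.length he
        simp only [tk_length] at this
        omega
      · have hle : u.length ≤ d := by simpa [tk_length] using h1.length_le
        refine ⟨h1.trans (tk_prefix x (by omega)), fun he => ?_, h3⟩
        have := congrArg List.length he
        rw [tk_length] at this
        omega
    have hnm : tk x d' ∉ {u : List (ZMod 2) | u <+: tk x d ∧ u ≠ tk x d ∧ Branch P u} := by
      rintro ⟨h1, h2, -⟩
      have hle : d' ≤ d := by simpa [tk_length] using h1.length_le
      have hde : d' = d := le_antisymm hle hdd'
      exact h2 (by rw [hde])
    calc k + 1 ≤ {u : List (ZMod 2) | u <+: tk x d ∧ u ≠ tk x d ∧ Branch P u}.ncard + 1 := by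
          have : k ≤ brCount P (tk x d) := hd
          unfold brCount at this
          omega
      _ = (insert (tk x d')
            {u : List (ZMod 2) | u <+: tk x d ∧ u ≠ tk x d ∧ Branch P u}).ncard :=
          (Set.ncard_insert_of_notMem hnm hfin0).symm
      _ ≤ brCount P (tk x (d' + 1)) := Set.ncard_le_ncard hsub hfin1

private lemma exists_level {P : Set CS} (hP : PerfSet P) (k : ℕ) :
    ∃ N, ∀ w : List (ZMod 2), w.length = N → (cyl w ∩ P).Nonempty → k ≤ brCount P w := by
  by_contra hcon
  push_neg at hcon
  set F : ℕ → Set CS := fun N => P ∩ {x | brCount P (tk x N) < k} with hF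
  have hFne : ∀ N, (F N).Nonempty := by
    intro N
    obtain ⟨w, hw1, ⟨x, hx1, hx2⟩, hw3⟩ := hcon N
    refine ⟨x, hx2, ?_⟩
    have hwx : tk x N = w := by
      rw [← hw1]
      exact tk_eq_of_mem_cyl hx1
    simpa [Set.mem_setOf_eq, hwx] using hw3
  have hdet : ∀ (N : ℕ) (Q : List (ZMod 2) → Prop), IsOpen {x : CS | Q (tk x N)} := by
    intro N Q
    rw [isOpen_iff_mem_nhds]
    intro x hx
    apply Filter.mem_of_superset ((isOpen_cyl (tk x N)).mem_nhds (mem_cyl_tk x N))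
    intro y hy
    have hty : tk y N = tk x N := by
      have := tk_eq_of_mem_cyl hy
      rwa [tk_length] at this
    simpa only [Set.mem_setOf_eq, hty] using hx
  have hFclosed : ∀ N, IsClosed (F N) := by
    intro N
    apply hP.1.closed.inter
    rw [← isOpen_compl_iff, Set.compl_setOf]
    exact hdet N (fun w => ¬ brCount P w < k)
  have hFsub : ∀ N, F (N + 1) ⊆ F N := by
    rintro N y ⟨hy1, hy2⟩
    exact ⟨hy1, lt_of_le_of_lt (brCount_mono P y (Nat.le_succ N)) hy2⟩
  obtain ⟨x, hxmem⟩ := IsCompact.nonempty_iInter_of_sequence_nonempty_isCompact_isClosed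
    F hFsub hFne ((hFclosed 0).isCompact) hFclosed
  have hxP : x ∈ P := (Set.mem_iInter.mp hxmem 0).1
  obtain ⟨d, hdk⟩ := exists_brCount_ge hP.1 hxP k
  have := (Set.mem_iInter.mp hxmem d).2
  simp only [Set.mem_setOf_eq] at this
  omega

private lemma measure_cyl_of_length {P : Set CS} {ν : Measure CS} (hP : PerfSet P)
    (hν : IsCanonical P ν) {k N : ℕ}
    (hN : ∀ w : List (ZMod 2), w.length = N → (cyl w ∩ P).Nonempty → k ≤ brCount P w)
    {w : List (ZMod 2)} (hw : w.length = N) : ν (cyl w) ≤ 2⁻¹ ^ k := by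
  by_cases hne : (cyl w ∩ P).Nonempty
  · refine (measure_cyl_le_brCount hν w).trans ?_
    exact pow_le_pow_right_of_le_one' (by simp [ENNReal.inv_le_one]) (hN w hw hne)
  · have hsub : cyl w ⊆ Pᶜ := fun x hx hxP => hne ⟨x, hx, hxP⟩
    rw [measure_mono_null hsub (measure_compl_P hP hν)]
    exact zero_le

private def wadd (w : List (ZMod 2)) (t : CS) : List (ZMod 2) :=
  List.ofFn fun i : Fin w.length => w.getD i 0 + t i

private lemma wadd_length (w : List (ZMod 2)) (t : CS) : (wadd w t).length = w.length :=
  List.length_ofFn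

private lemma wadd_getD {w : List (ZMod 2)} {t : CS} {i : ℕ} (h : i < w.length) :
    (wadd w t).getD i 0 = w.getD i 0 + t i := by
  rw [List.getD_eq_getElem _ _ (by simpa [wadd] using h), List.getD_eq_getElem _ _ h]
  simp [wadd]

private lemma zmod2_add_add (a b : ZMod 2) : a + b + b = a :=
  (by decide : ∀ a b : ZMod 2, a + b + b = a) a b

private lemma image_add_cyl (w : List (ZMod 2)) (t : CS) :
    (fun g => g + t) '' cyl w = cyl (wadd w t) := by
  ext x
  constructor
  · rintro ⟨g, hg, rfl⟩ i hi
    rw [wadd_length] at hi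
    rw [wadd_getD hi, ← hg i hi]
    rfl
  · intro hx
    refine ⟨x + t, fun i hi => ?_, ?_⟩
    · have h1 := hx i (by rw [wadd_length]; exact hi)
      rw [wadd_getD hi] at h1
      show x i + t i = w.getD i 0
      rw [h1, zmod2_add_add]
    · funext i
      exact zmod2_add_add (x i) (t i)

end Stmt15Aux

/-- Every strongly null subset of `2^ω` is perfectly null in the transitive
sense: for every perfect `P` there is a `G_δ` set `G ⊇ X` with `(G + t) ∩ P` being
`P`-null for every `t`. -/
theorem stmt_15 (X : Set CS) (hX : StronglyNull X) :
    ∀ P, PerfSet P → ∃ G : Set CS, IsGδ G ∧ X ⊆ G ∧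
      ∀ t : CS, PNull P ((fun g => g + t) '' G) := by
  intro P hP
  choose Nf hNf using fun k => exists_level hP k
  have hcov : ∀ m : ℕ, ∃ A : ℕ → Set CS,
      (∀ n, ∃ N : ℕ, (2 : ℝ)⁻¹ ^ N < (2 : ℝ)⁻¹ ^ (Nf (n + m + 1)) ∧
        ∀ x ∈ A n, ∀ y ∈ A n, ∀ i < N, x i = y i) ∧ X ⊆ ⋃ n, A n :=
    fun m => hX _ (fun n => pow_pos (by norm_num) _)
  choose A hA1 hA2 using hcov
  have hcyl : ∀ m n, ∃ B : Set CS, A m n ⊆ B ∧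
      (B = ∅ ∨ ∃ w : List (ZMod 2), w.length = Nf (n + m + 1) ∧ B = cyl w) := by
    intro m n
    rcases Set.eq_empty_or_nonempty (A m n) with he | ⟨a, ha⟩
    · exact ⟨∅, he ▸ Set.Subset.refl _, Or.inl rfl⟩
    · obtain ⟨N, hlt, hagree⟩ := hA1 m n
      have hNle : Nf (n + m + 1) ≤ N :=
        le_of_lt ((pow_lt_pow_iff_right_of_lt_one₀ (by norm_num) (by norm_num)).mp hlt)
      refine ⟨cyl (tk a (Nf (n + m + 1))), ?_, Or.inr ⟨_, tk_length _ _, rfl⟩⟩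
      intro x hx i hi
      rw [tk_length] at hi
      rw [tk_getD a hi]
      exact hagree x hx a ha i (lt_of_lt_of_le hi hNle)
  choose B hB1 hB2 using hcyl
  refine ⟨⋂ m, ⋃ n, B m n, ?_, ?_, ?_⟩
  · refine IsGδ.iInter fun m => IsOpen.isGδ (isOpen_iUnion fun n => ?_)
    rcases hB2 m n with h | ⟨w, -, h⟩
    · rw [h]; exact isOpen_empty
    · rw [h]; exact isOpen_cyl w
  · exact Set.subset_iInter fun m => (hA2 m).trans (Set.iUnion_mono (hB1 m))
  · intro t ν hν
    have key : ∀ m : ℕ,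
        ν (((fun g => g + t) '' ⋂ m', ⋃ n, B m' n) ∩ P) ≤ 2⁻¹ ^ m := by
      intro m
      have hsub : ((fun g => g + t) '' ⋂ m', ⋃ n, B m' n) ∩ P ⊆
          ⋃ n, (fun g => g + t) '' B m n := by
        rintro x ⟨⟨g, hg, rfl⟩, -⟩
        obtain ⟨n, hn⟩ := Set.mem_iUnion.mp (Set.mem_iInter.mp hg m)
        exact Set.mem_iUnion.mpr ⟨n, g, hn, rfl⟩
      have hterm : ∀ n : ℕ, ν ((fun g => g + t) '' B m n) ≤ 2⁻¹ ^ (n + m + 1) := by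
        intro n
        rcases hB2 m n with h | ⟨w, hw, h⟩
        · rw [h]
          simp
        · rw [h, image_add_cyl]
          exact measure_cyl_of_length hP hν (hNf (n + m + 1))
            (by rw [wadd_length, hw])
      have hts : (∑' n : ℕ, (2 : ENNReal)⁻¹ ^ (n + m + 1)) = 2⁻¹ ^ m := by
        have hre : ∀ n : ℕ, (2 : ENNReal)⁻¹ ^ (n + m + 1) = 2⁻¹ ^ n * (2⁻¹ ^ m * 2⁻¹) := by
          intro n
          rw [pow_add, pow_add, pow_one, mul_assoc]
        rw [tsum_congr hre, ENNReal.tsum_mul_right, ENNReal.tsum_geometric,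
          ENNReal.one_sub_inv_two, inv_inv,
          mul_comm ((2 : ENNReal)⁻¹ ^ m) 2⁻¹, ← mul_assoc,
          ENNReal.mul_inv_cancel (by norm_num) (by norm_num), one_mul]
      calc ν (((fun g => g + t) '' ⋂ m', ⋃ n, B m' n) ∩ P)
          ≤ ν (⋃ n, (fun g => g + t) '' B m n) := measure_mono hsub
        _ ≤ ∑' n, ν ((fun g => g + t) '' B m n) := measure_iUnion_le _
        _ ≤ ∑' n : ℕ, (2 : ENNReal)⁻¹ ^ (n + m + 1) := ENNReal.tsum_le_tsum hterm
        _ = 2⁻¹ ^ m := hts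
    by_contra hne
    obtain ⟨m, hm⟩ := ENNReal.exists_inv_two_pow_lt hne
    exact absurd (key m) (not_le.mpr hm)
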